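/- Under hyper-generalized recurrence with recurrence 1-forms A and B, if r ≠ 0 and ∇_U r = 0 for all U ∈ V (i.e. r is a nonzero constant), then the recurrence forms are related by A + 2(n−1)·B = 0. (Theorem 2.3(a).) -/

import Mathlib

open scoped BigOperators

/-- Kulkarni–Nomizu product of two bilinear forms (as real-valued functions). -/
def KN {V : Type*} (h k : V → V → ℝ) (X Y Z W : V) : ℝ :=
  h X Z * k Y W + h Y W * k X Z - h X W * k Y Z - h Y Z * k X W

/-- The tensor `G(X,Y,Z,W) = g(X,Z)g(Y,W) - g(Y,Z)g(X,W)`. -/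
def Gten {V : Type*} (g : V → V → ℝ) (X Y Z W : V) : ℝ :=
  g X Z * g Y W - g Y Z * g X W

/-- Derivation action of the curvature endomorphism `Rend U V` on a quadrilinear form `T`. -/
def derAct {V : Type*} (Rend : V → V → V → V) (T : V → V → V → V → ℝ)
    (U V' X Y Z W : V) : ℝ :=
  - T (Rend U V' X) Y Z W - T X (Rend U V' Y) Z W
    - T X Y (Rend U V' Z) W - T X Y Z (Rend U V' W)

theorem hgr_constant_scalar_form_relation {V : Type*} [AddCommGroup V] [Module ℝ V]
    (n : ℕ) (hn : 3 ≤ n)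
    (b : Module.Basis (Fin n) ℝ V) (e' : Fin n → V)
    (g : V →ₗ[ℝ] V →ₗ[ℝ] ℝ)
    (hg_symm : ∀ X Y, g X Y = g Y X)
    (hg_nd : ∀ X, (∀ Y, g X Y = 0) → X = 0)
    (hdual : ∀ i j, g (b i) (e' j) = if i = j then (1 : ℝ) else 0)
    (R : V →ₗ[ℝ] V →ₗ[ℝ] V →ₗ[ℝ] V →ₗ[ℝ] ℝ)
    (hR_ne : R ≠ 0)
    (hR_anti : ∀ X Y Z W, R X Y Z W = - R Y X Z W)
    (hR_pair : ∀ X Y Z W, R X Y Z W = R Z W X Y)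
    (Ric : V → V → ℝ)
    (hRic : ∀ X Z, Ric X Z = ∑ i, R X (b i) Z (e' i))
    (r : ℝ) (hr : r = ∑ i, Ric (b i) (e' i))
    (D : V →ₗ[ℝ] V →ₗ[ℝ] V →ₗ[ℝ] V →ₗ[ℝ] V →ₗ[ℝ] ℝ)
    (hBianchi : ∀ X Y Z W U, D X Y Z W U + D Y Z X W U + D Z X Y W U = 0)
    (A B : V →ₗ[ℝ] ℝ) (hA : A ≠ 0) (hB : B ≠ 0)
    (hHGR : ∀ U X Y Z W,
      D U X Y Z W = A U * R X Y Z W + B U * KN (fun a c => g a c) Ric X Y Z W)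
    (DRic : V → V → V → ℝ)
    (hDRicDef : ∀ U X Z, DRic U X Z = ∑ i, D U X (b i) Z (e' i))
    (Dr : V → ℝ)
    (hDrDef : ∀ U, Dr U = ∑ i, DRic U (b i) (e' i))
    (hr_ne : r ≠ 0) (hr_const : ∀ U, Dr U = 0)
    :
    ∀ X, A X + 2 * ((n : ℝ) - 1) * B X = 0 := by
  intro X
  have h0 := hr_const X
  rw [hDrDef] at h0
  have hinner : ∀ j, DRic X (b j) (e' j)
      = A X * Ric (b j) (e' j)
        + B X * (r + (n : ℝ) * Ric (b j) (e' j) - 2 * Ric (b j) (e' j)) := by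
    intro j
    rw [hDRicDef]
    have : ∀ i, D X (b j) (b i) (e' j) (e' i)
        = A X * R (b j) (b i) (e' j) (e' i)
          + B X * (Ric (b i) (e' i) + Ric (b j) (e' j)
            - (if j = i then (1:ℝ) else 0) * Ric (b i) (e' j)
            - (if i = j then (1:ℝ) else 0) * Ric (b j) (e' i)) := by
      intro i
      rw [hHGR]
      simp only [KN, hdual]
      simp
    simp only [this]
    rw [Finset.sum_add_distrib, ← Finset.mul_sum, ← hRic]
    congr 1
    rw [← Finset.mul_sum]
    congr 1
    rw [Finset.sum_sub_distrib, Finset.sum_sub_distrib, Finset.sum_add_distrib]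
    have s1 : ∑ i : Fin n, Ric (b i) (e' i) = r := hr.symm
    have s2 : ∑ i : Fin n, Ric (b j) (e' j) = (n : ℝ) * Ric (b j) (e' j) := by
      simp [Finset.sum_const, nsmul_eq_mul]
    have s3 : ∑ i : Fin n, (if j = i then (1:ℝ) else 0) * Ric (b i) (e' j)
        = Ric (b j) (e' j) := by
      rw [Finset.sum_eq_single j] <;> simp +contextual [eq_comm]
    have s4 : ∑ i : Fin n, (if i = j then (1:ℝ) else 0) * Ric (b j) (e' i)
        = Ric (b j) (e' j) := by
      rw [Finset.sum_eq_single j] <;> simp +contextual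
    rw [s1, s2, s3, s4]
    ring
  simp only [hinner] at h0
  rw [Finset.sum_add_distrib, ← Finset.mul_sum, ← hr] at h0
  have h1 : ∑ j : Fin n, B X * (r + (n : ℝ) * Ric (b j) (e' j) - 2 * Ric (b j) (e' j))
      = B X * ((n : ℝ) * r + (n : ℝ) * r - 2 * r) := by
    rw [← Finset.mul_sum]
    congr 1
    rw [Finset.sum_sub_distrib, Finset.sum_add_distrib, ← Finset.mul_sum, ← Finset.mul_sum,
      ← hr, Finset.sum_const, nsmul_eq_mul]
    simp
  rw [h1] at h0
  have h2 : (A X + 2 * ((n : ℝ) - 1) * B X) * r = 0 := by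
    rw [← h0]; ring
  rcases mul_eq_zero.mp h2 with h | h
  · exact h
  · exact absurd h hr_ne
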